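/- Let S be a finite p-group of order p^n with n ≥ 3 such that the commutator subgroup S' equals the Frattini subgroup Φ(S) and has index p² in S. If S has an abelian maximal subgroup, then S is of maximal class, i.e., its nilpotency class equals n − 1. -/

import Mathlib

open Subgroup
open scoped commutatorElement

variable {p : ℕ}

lemma aux_normal {G : Type*} [Group G] [Finite G] (hp : p.Prime) (hG : IsPGroup p G)
    {A : Subgroup G} (hA : IsCoatom A) : A.Normal := by
  haveI : Fact p.Prime := ⟨hp⟩
  haveI : Group.IsNilpotent G := hG.isNilpotent
  exact NormalizerCondition.normal_of_coatom A normalizerCondition_of_isNilpotent hA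

lemma aux_index {G : Type*} [Group G] [Finite G] (hp : p.Prime) (hG : IsPGroup p G)
    {A : Subgroup G} (hA : IsCoatom A) : A.index = p := by
  haveI : Fact p.Prime := ⟨hp⟩
  haveI hAn : A.Normal := aux_normal hp hG hA
  have hQp : IsPGroup p (G ⧸ A) := hG.to_quotient A
  obtain ⟨k, hk⟩ := (IsPGroup.iff_card).mp hQp
  have hidx : A.index = p ^ k := by rw [Subgroup.index, hk]
  have hk0 : k ≠ 0 := by
    intro h
    rw [h, pow_zero] at hidx
    exact hA.1 (Subgroup.index_eq_one.mp hidx)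
  rcases Nat.lt_or_ge k 2 with hk2 | hk2
  · interval_cases k
    · exact absurd rfl hk0
    · rw [hidx, pow_one]
  · exfalso
    haveI : Fintype (G ⧸ A) := Fintype.ofFinite _
    have hdvd : p ∣ Fintype.card (G ⧸ A) := by
      rw [← Nat.card_eq_fintype_card, hk]
      exact dvd_pow_self p hk0
    obtain ⟨g, hg⟩ := exists_prime_orderOf_dvd_card p hdvd
    set T : Subgroup (G ⧸ A) := zpowers g with hT
    have hTcard : Nat.card T = p := by rw [hT, Nat.card_zpowers, hg]
    have hTne : T ≠ ⊤ := by
      intro h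
      rw [h, Subgroup.card_top, hk] at hTcard
      have := Nat.pow_right_injective hp.two_le (hTcard.trans (pow_one p).symm)
      omega
    have hcomap : A < comap (QuotientGroup.mk' A) T := by
      refine lt_of_le_of_ne ?_ ?_
      · intro a ha
        simp only [mem_comap]
        have : (QuotientGroup.mk' A) a = 1 := (QuotientGroup.eq_one_iff a).mpr ha
        rw [this]; exact T.one_mem
      · intro h
        have hbot : T = ⊥ := by
          rw [← map_comap_eq_self_of_surjective (QuotientGroup.mk'_surjective A) T, ← h]
          ext y
          simp only [mem_map, mem_bot]
          constructor
          · rintro ⟨a, ha, rfl⟩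
            exact (QuotientGroup.eq_one_iff a).mpr ha
          · rintro rfl
            exact ⟨1, A.one_mem, map_one _⟩
        rw [hbot, Subgroup.card_bot] at hTcard
        have := hp.two_le
        omega
    have htop := hA.2 _ hcomap
    have : T = ⊤ := by
      rw [← map_comap_eq_self_of_surjective (QuotientGroup.mk'_surjective A) T, htop,
        Subgroup.map_top_of_surjective _ (QuotientGroup.mk'_surjective A)]
    exact hTne this


lemma aux_struct {G : Type*} [Group G] [Finite G] (hp : p.Prime) (hG : IsPGroup p G)
    {A : Subgroup G} (hA : IsCoatom A) (hab : ∀ a ∈ A, ∀ b ∈ A, a * b = b * a)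
    (hna : commutator G ≠ ⊥) :
    center G ≤ A ∧ commutator G ≤ A ∧
      Nat.card A = Nat.card (center G) * Nat.card (commutator G) ∧
      (center G ⊓ commutator G = ⊥ →
        Nat.card (commutator G) ≤ Nat.card (⁅commutator G, (⊤ : Subgroup G)⁆ : Subgroup G)) := by
  haveI : Fact p.Prime := ⟨hp⟩
  haveI hAn : A.Normal := aux_normal hp hG hA
  -- pick x outside A
  obtain ⟨x, hx⟩ : ∃ x, x ∉ A := by
    by_contra h
    push_neg at h
    exact hA.1 ((Subgroup.eq_top_iff' A).mpr h)
  have hsup : A ⊔ zpowers x = ⊤ := by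
    refine hA.2 _ (lt_of_le_of_ne le_sup_left ?_)
    intro h
    exact hx (h ▸ Subgroup.mem_sup_right (mem_zpowers x))
  -- elements ⁅a, x⁆ stay in A
  have hmemA : ∀ a : A, (⁅(a : G), x⁆) ∈ A := by
    intro a
    have h1 : x * (a : G)⁻¹ * x⁻¹ ∈ A := hAn.conj_mem _ (A.inv_mem a.2) x
    have : (a : G) * (x * (a : G)⁻¹ * x⁻¹) ∈ A := A.mul_mem a.2 h1
    simpa [commutatorElement_def, mul_assoc] using this
  -- the commutator homomorphism
  have map_mul' : ∀ a b : A, ⁅((a * b : A) : G), x⁆ = ⁅(a : G), x⁆ * ⁅(b : G), x⁆ := by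
    intro a b
    have hc : ⁅(b : G), x⁆ ∈ A := hmemA b
    have hd : x * (a : G)⁻¹ * x⁻¹ ∈ A := hAn.conj_mem _ (A.inv_mem a.2) x
    have key := hab _ hc _ hd
    push_cast
    simp only [commutatorElement_def] at key ⊢
    calc (a : G) * b * x * ((a : G) * b)⁻¹ * x⁻¹
        = (a : G) * ((b * x * (b : G)⁻¹ * x⁻¹) * (x * (a : G)⁻¹ * x⁻¹)) := by group
      _ = (a : G) * ((x * (a : G)⁻¹ * x⁻¹) * (b * x * (b : G)⁻¹ * x⁻¹)) := by rw [key]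
      _ = (a : G) * x * (a : G)⁻¹ * x⁻¹ * ((b : G) * x * (b : G)⁻¹ * x⁻¹) := by group
  let f : A →* G :=
    { toFun := fun a => ⁅(a : G), x⁆
      map_one' := by simp
      map_mul' := map_mul' }
  have hf : ∀ a : A, f a = ⁅(a : G), x⁆ := fun a => rfl
  -- kernel characterization
  have hker : ∀ a : A, f a = 1 ↔ (a : G) ∈ center G := by
    intro a
    constructor
    · intro h
      have hcomm : Commute (a : G) x := commutatorElement_eq_one_iff_commute.mp h
      have hcent : (⊤ : Subgroup G) ≤ centralizer {(a : G)} := by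
        rw [← hsup]
        refine sup_le ?_ ?_
        · intro b hb
          exact mem_centralizer_iff.mpr (by rintro h ⟨rfl⟩; exact hab _ a.2 _ hb)
        · refine zpowers_le.mpr (mem_centralizer_iff.mpr ?_)
          rintro h ⟨rfl⟩
          exact hcomm.eq
      refine Subgroup.mem_center_iff.mpr fun g => ?_
      exact (mem_centralizer_iff.mp (hcent (mem_top g)) _ rfl).symm
    · intro h
      exact commutatorElement_eq_one_iff_commute.mpr ((Subgroup.mem_center_iff.mp h x).symm)
  -- center ≤ A
  have hZA : center G ≤ A := by
    intro z hz
    by_contra hzA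
    have hsupz : A ⊔ zpowers z = ⊤ := by
      refine hA.2 _ (lt_of_le_of_ne le_sup_left ?_)
      intro h
      exact hzA (h ▸ Subgroup.mem_sup_right (mem_zpowers z))
    have htop : (⊤ : Subgroup G) ≤ center G := by
      rw [← hsupz]
      refine sup_le ?_ (zpowers_le.mpr hz)
      intro a ha
      have hcent : (⊤ : Subgroup G) ≤ centralizer {a} := by
        rw [← hsupz]
        refine sup_le ?_ ?_
        · intro b hb
          exact mem_centralizer_iff.mpr (by rintro h ⟨rfl⟩; exact hab _ ha _ hb)
        · refine zpowers_le.mpr (mem_centralizer_iff.mpr ?_)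
          rintro h ⟨rfl⟩
          exact (Subgroup.mem_center_iff.mp hz a)
      refine Subgroup.mem_center_iff.mpr fun g => ?_
      exact (mem_centralizer_iff.mp (hcent (mem_top g)) _ rfl).symm
    refine hna ?_
    rw [_root_.commutator_def, eq_bot_iff]
    rw [Subgroup.commutator_le]
    intro g₁ _ g₂ _
    have hcc := Subgroup.mem_center_iff.mp (htop (mem_top g₂)) g₁
    exact commutatorElement_eq_one_iff_commute.mpr hcc
  -- range = commutator
  have hrle : f.range ≤ commutator G := by
    rintro y ⟨a, rfl⟩
    exact Subgroup.commutator_mem_commutator (mem_top _) (mem_top _)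
  have hrA : f.range ≤ A := by
    rintro y ⟨a, rfl⟩
    exact hmemA a
  have hnormal : f.range.Normal := by
    rw [← Subgroup.normalizer_eq_top_iff]
    rw [eq_top_iff, ← hsup]
    have hconj : ∀ c ∈ A, ∀ h ∈ f.range, c * h * c⁻¹ = h := by
      intro c hc h hh
      have : h * c⁻¹ = c⁻¹ * h := hab _ (hrA hh) _ (A.inv_mem hc)
      rw [mul_assoc, this, ← mul_assoc, mul_inv_cancel, one_mul]
    refine sup_le ?_ ?_
    · intro c hc
      refine Subgroup.mem_normalizer_iff.mpr fun h => ⟨fun hh => ?_, fun hh => ?_⟩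
      · rw [hconj c hc h hh]; exact hh
      · have h2 := hconj c⁻¹ (A.inv_mem hc) _ hh
        simp only [inv_inv] at h2
        have h3 : h = c⁻¹ * (c * h * c⁻¹) * c := by group
        rw [h3, h2]
        exact hh
    · refine zpowers_le.mpr (Subgroup.mem_normalizer_iff.mpr fun h => ⟨?_, ?_⟩)
      · rintro ⟨a, rfl⟩
        refine ⟨⟨x * a * x⁻¹, hAn.conj_mem _ a.2 x⟩, ?_⟩
        show ⁅x * (a : G) * x⁻¹, x⁆ = x * f a * x⁻¹
        rw [hf]
        group
      · rintro ⟨a, ha⟩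
        refine ⟨⟨x⁻¹ * a * x, by simpa using hAn.conj_mem _ a.2 x⁻¹⟩, ?_⟩
        have ha' : ⁅(a : G), x⁆ = x * h * x⁻¹ := ha
        have hh2 : h = x⁻¹ * ⁅(a : G), x⁆ * x := by rw [ha']; group
        show ⁅x⁻¹ * (a : G) * x, x⁆ = h
        rw [hh2]
        group
  have hrange : f.range = commutator G := by
    refine le_antisymm hrle ?_
    haveI := hnormal
    rw [_root_.commutator_def, Subgroup.commutator_le]
    intro g₁ _ g₂ _
    refine (QuotientGroup.eq_one_iff _).mp ?_
    set mk := QuotientGroup.mk' f.range with hmk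
    have hmks : Function.Surjective mk := QuotientGroup.mk'_surjective _
    have hcen : ∀ a ∈ A, mk a ∈ center (G ⧸ f.range) := by
      intro a ha
      have hcent : (⊤ : Subgroup (G ⧸ f.range)) ≤ centralizer {mk a} := by
        rw [← Subgroup.map_top_of_surjective mk hmks, ← hsup, Subgroup.map_sup]
        refine sup_le ?_ ?_
        · rintro y ⟨b, hb, rfl⟩
          refine mem_centralizer_iff.mpr ?_
          rintro h ⟨rfl⟩
          rw [← map_mul, ← map_mul, hab _ ha _ hb]
        · rw [MonoidHom.map_zpowers]
          refine zpowers_le.mpr (mem_centralizer_iff.mpr ?_)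
          rintro h ⟨rfl⟩
          have : mk ⁅a, x⁆ = 1 := (QuotientGroup.eq_one_iff _).mpr ⟨⟨a, ha⟩, rfl⟩
          rw [map_commutatorElement] at this
          exact (commutatorElement_eq_one_iff_commute.mp this).eq
      refine Subgroup.mem_center_iff.mpr fun g => ?_
      exact (mem_centralizer_iff.mp (hcent (mem_top g)) _ rfl).symm
    have hcenx : mk x ∈ center (G ⧸ f.range) := by
      have hcent : (⊤ : Subgroup (G ⧸ f.range)) ≤ centralizer {mk x} := by
        rw [← Subgroup.map_top_of_surjective mk hmks, ← hsup, Subgroup.map_sup]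
        refine sup_le ?_ ?_
        · rintro y ⟨b, hb, rfl⟩
          refine mem_centralizer_iff.mpr ?_
          rintro h ⟨rfl⟩
          have : mk ⁅b, x⁆ = 1 := (QuotientGroup.eq_one_iff _).mpr ⟨⟨b, hb⟩, rfl⟩
          rw [map_commutatorElement] at this
          exact (commutatorElement_eq_one_iff_commute.mp this).eq.symm
        · rw [MonoidHom.map_zpowers]
          exact zpowers_le.mpr (mem_centralizer_iff.mpr (by rintro h ⟨rfl⟩; rfl))
      refine Subgroup.mem_center_iff.mpr fun g => ?_
      exact (mem_centralizer_iff.mp (hcent (mem_top g)) _ rfl).symm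
    have htop : (⊤ : Subgroup (G ⧸ f.range)) ≤ center (G ⧸ f.range) := by
      rw [← Subgroup.map_top_of_surjective mk hmks, ← hsup, Subgroup.map_sup]
      refine sup_le ?_ ?_
      · rintro y ⟨b, hb, rfl⟩
        exact hcen b hb
      · rw [MonoidHom.map_zpowers]
        exact zpowers_le.mpr hcenx
    have hcc := Subgroup.mem_center_iff.mp (htop (mem_top (mk g₂))) (mk g₁)
    show mk ⁅g₁, g₂⁆ = 1
    rw [map_commutatorElement]
    exact commutatorElement_eq_one_iff_commute.mpr hcc
  have hCA : commutator G ≤ A := hrange ▸ hrA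
  refine ⟨hZA, hCA, ?_, ?_⟩
  · -- card identity
    have hkerEq : f.ker = (center G).subgroupOf A := by
      ext a
      rw [MonoidHom.mem_ker, hker a, Subgroup.mem_subgroupOf]
    have c1 : Nat.card A = Nat.card (A ⧸ f.ker) * Nat.card f.ker :=
      Subgroup.card_eq_card_quotient_mul_card_subgroup _
    have c2 : Nat.card (A ⧸ f.ker) = Nat.card f.range :=
      Nat.card_congr (QuotientGroup.quotientKerEquivRange f).toEquiv
    have c3 : Nat.card f.ker = Nat.card (center G) := by
      rw [hkerEq]
      exact Nat.card_congr (Subgroup.subgroupOfEquivOfLe hZA).toEquiv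
    rw [c1, c2, c3, hrange, mul_comm]
  · intro hdisj
    set T := (⁅commutator G, (⊤ : Subgroup G)⁆ : Subgroup G) with hT
    let φ : commutator G → T :=
      fun s => ⟨⁅(s : G), x⁆, Subgroup.commutator_mem_commutator s.2 (mem_top x)⟩
    have hφinj : Function.Injective φ := by
      intro s t hst
      have h0 : ⁅(s : G), x⁆ = ⁅(t : G), x⁆ := congrArg Subtype.val hst
      have h1 : f ⟨(s : G), hCA s.2⟩ = f ⟨(t : G), hCA t.2⟩ := by rw [hf, hf]; exact h0
      have h2 : f (⟨(s : G), hCA s.2⟩ * (⟨(t : G), hCA t.2⟩)⁻¹) = 1 := by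
        rw [map_mul, map_inv, h1, mul_inv_cancel]
      have h3 := (hker _).mp h2
      have h4 : (s : G) * (t : G)⁻¹ ∈ center G := by simpa using h3
      have h5 : (s : G) * (t : G)⁻¹ ∈ commutator G :=
        (commutator G).mul_mem s.2 ((commutator G).inv_mem t.2)
      have h6 : (s : G) * (t : G)⁻¹ ∈ (⊥ : Subgroup G) := hdisj ▸ mem_inf.mpr ⟨h4, h5⟩
      have h7 := mem_bot.mp h6
      exact Subtype.ext (mul_inv_eq_one.mp h7)
    exact Nat.card_le_card_of_injective φ hφinj
universe u

lemma aux_key {p : ℕ} (hp : p.Prime) : ∀ (n : ℕ), 3 ≤ n → ∀ (G : Type u) [Group G] [Finite G],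
    IsPGroup p G → Nat.card G = p ^ n →
    Nat.card (commutator G) = p ^ (n - 2) →
    (∃ A : Subgroup G, IsCoatom A ∧ ∀ a ∈ A, ∀ b ∈ A, a * b = b * a) →
    ∀ (hnil : Group.IsNilpotent G), Group.nilpotencyClass G = n - 1 := by
  intro n
  induction n using Nat.strong_induction_on with
  | _ n ih =>
  intro hn G _ _ hG hcard hcomm hM hnil
  haveI : Fact p.Prime := ⟨hp⟩
  have hp1 : 1 < p := hp.one_lt
  obtain ⟨A, hA, hab⟩ := hM
  have hcommne : commutator G ≠ ⊥ := by
    intro h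
    rw [h, Subgroup.card_bot] at hcomm
    have : 1 < p ^ (n - 2) := Nat.one_lt_pow (by omega) hp1
    omega
  obtain ⟨hZA, hCA, hcardA, hinj⟩ := aux_struct hp hG hA hab hcommne
  have hidx : A.index = p := aux_index hp hG hA
  have hApow : Nat.card A = p ^ (n - 1) := by
    have h1 : Nat.card A * p = p ^ n := by
      rw [← hcard, ← hidx]
      exact Subgroup.card_mul_index A
    have h2 : p ^ (n - 1) * p = p ^ n := by rw [← pow_succ]; congr 1; omega
    exact Nat.eq_of_mul_eq_mul_right hp.pos (h1.trans h2.symm)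
  have hZcard : Nat.card (center G) = p := by
    have h1 : Nat.card (center G) * p ^ (n - 2) = p ^ (n - 1) := by
      rw [← hcomm, ← hcardA, hApow]
    have h2 : p * p ^ (n - 2) = p ^ (n - 1) := by rw [← pow_succ']; congr 1; omega
    exact Nat.eq_of_mul_eq_mul_right (pow_pos hp.pos _) (h1.trans h2.symm)
  have hZC : center G ≤ commutator G := by
    by_contra hnle
    have hinf : center G ⊓ commutator G = ⊥ := by
      have hdvd : Nat.card (center G ⊓ commutator G : Subgroup G) ∣ p :=
        hZcard ▸ Subgroup.card_dvd_of_le inf_le_left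
      rcases (Nat.Prime.eq_one_or_self_of_dvd hp _ hdvd) with h1 | h1
      · exact Subgroup.card_eq_one.mp h1
      · exfalso
        have heq : center G ⊓ commutator G = center G :=
          Subgroup.eq_of_le_of_card_ge inf_le_left (by rw [h1, hZcard])
        exact hnle (inf_eq_left.mp heq)
    have hle := hinj hinf
    have hle2 : (⁅commutator G, (⊤ : Subgroup G)⁆ : Subgroup G) ≤ commutator G := by
      rw [_root_.commutator_def]
      exact Subgroup.commutator_mono le_top le_rfl
    have heq : (⁅commutator G, (⊤ : Subgroup G)⁆ : Subgroup G) = commutator G :=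
      Subgroup.eq_of_le_of_card_ge hle2 hle
    have hlcs : ∀ k, commutator G ≤ Subgroup.lowerCentralSeries (⊤ : Subgroup G) k := by
      intro k
      induction k with
      | zero => rw [Subgroup.lowerCentralSeries_zero]; exact le_top
      | succ k ihk =>
        rw [Subgroup.lowerCentralSeries_succ]
        calc commutator G = ⁅commutator G, (⊤ : Subgroup G)⁆ := heq.symm
          _ ≤ ⁅Subgroup.lowerCentralSeries (⊤ : Subgroup G) k, (⊤ : Subgroup G)⁆ := Subgroup.commutator_mono ihk le_rfl
    obtain ⟨k, hk⟩ := Subgroup.nilpotent_iff_lowerCentralSeries.mp hnil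
    exact hcommne (le_bot_iff.mp (hk ▸ hlcs k))
  -- pass to quotient by the center
  set Z := center G with hZ
  have hZA' : Z ≤ A := hZA
  have hQp : IsPGroup p (G ⧸ Z) := hG.to_quotient Z
  have hQcard : Nat.card (G ⧸ Z) = p ^ (n - 1) := by
    have h1 := Subgroup.card_eq_card_quotient_mul_card_subgroup Z
    rw [hcard, hZcard] at h1
    have h2 : p ^ (n - 1) * p = p ^ n := by rw [← pow_succ]; congr 1; omega
    exact Nat.eq_of_mul_eq_mul_right hp.pos ((h2.trans h1).symm)
  set mkZ := QuotientGroup.mk' Z with hmkZ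
  have hmks : Function.Surjective mkZ := QuotientGroup.mk'_surjective Z
  have hcommQ : commutator (G ⧸ Z) = Subgroup.map mkZ (commutator G) := by
    rw [_root_.commutator_def, _root_.commutator_def, Subgroup.map_commutator,
      Subgroup.map_top_of_surjective _ hmks]
  have hQcomm : Nat.card (commutator (G ⧸ Z)) = p ^ (n - 3) := by
    have hcardQC : Nat.card (commutator (G ⧸ Z)) * p = p ^ (n - 2) := by
      set ψ := mkZ.comp (commutator G).subtype with hψ
      have hψrange : ψ.range = Subgroup.map mkZ (commutator G) := by
        rw [hψ, MonoidHom.range_comp, Subgroup.range_subtype]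
      have hψker : ψ.ker = Z.subgroupOf (commutator G) := by
        ext a
        simp only [MonoidHom.mem_ker, hψ, MonoidHom.comp_apply, Subgroup.mem_subgroupOf]
        exact QuotientGroup.eq_one_iff _
      have c1 : Nat.card (commutator G) = Nat.card ((commutator G) ⧸ ψ.ker) * Nat.card ψ.ker :=
        Subgroup.card_eq_card_quotient_mul_card_subgroup _
      have c2 : Nat.card ((commutator G) ⧸ ψ.ker) = Nat.card ψ.range :=
        Nat.card_congr (QuotientGroup.quotientKerEquivRange ψ).toEquiv
      have c3 : Nat.card ψ.ker = p := by
        rw [hψker, Nat.card_congr (Subgroup.subgroupOfEquivOfLe hZC).toEquiv, hZcard]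
      rw [← hcomm, c1, c2, c3, hψrange, ← hcommQ]
    have h2 : p ^ (n - 3) * p = p ^ (n - 2) := by rw [← pow_succ]; congr 1; omega
    exact Nat.eq_of_mul_eq_mul_right hp.pos (hcardQC.trans h2.symm)
  have hAm : Subgroup.comap mkZ (Subgroup.map mkZ A) = A := by
    rw [Subgroup.comap_map_eq, QuotientGroup.ker_mk', sup_of_le_left hZA']
  have hMQ : ∃ M : Subgroup (G ⧸ Z), IsCoatom M ∧ ∀ a ∈ M, ∀ b ∈ M, a * b = b * a := by
    refine ⟨Subgroup.map mkZ A, ⟨?_, ?_⟩, ?_⟩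
    · intro h
      rw [h, Subgroup.comap_top] at hAm
      exact hA.1 hAm.symm
    · intro T hT
      have h1 : A < Subgroup.comap mkZ T := by
        refine lt_of_le_of_ne (hAm ▸ Subgroup.comap_mono hT.le) fun h => ?_
        have : T = Subgroup.map mkZ A := by
          rw [← Subgroup.map_comap_eq_self_of_surjective hmks T, ← h]
        exact hT.ne' this
      have h2 := hA.2 _ h1
      rw [← Subgroup.map_comap_eq_self_of_surjective hmks T, h2,
        Subgroup.map_top_of_surjective _ hmks]
    · rintro u ⟨a, ha, rfl⟩ v ⟨b, hb, rfl⟩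
      rw [← map_mul, ← map_mul, hab a ha b hb]
  have hQnil : Group.IsNilpotent (G ⧸ Z) := hQp.isNilpotent
  have hQclass : Group.nilpotencyClass (G ⧸ Z) = n - 2 := by
    rcases Nat.lt_or_ge n 4 with h4 | h4
    · have hn3 : n = 3 := by omega
      have habel : ∀ a b : G ⧸ Z, a * b = b * a :=
        IsPGroup.commutative_of_card_eq_prime_sq (p := p) (by rw [hQcard, hn3])
      have hcen : center (G ⧸ Z) = ⊤ := by
        rw [eq_top_iff]
        intro q _
        exact Subgroup.mem_center_iff.mpr fun g => habel g q
      have h1 : Group.nilpotencyClass (G ⧸ Z) ≤ 1 :=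
        Subgroup.upperCentralSeries_eq_top_iff_nilpotencyClass_le.mp
          (by rw [Subgroup.upperCentralSeries_one]; exact hcen)
      have hQnontriv : Nontrivial (G ⧸ Z) :=
        Finite.one_lt_card_iff_nontrivial.mp
          (by rw [hQcard]; exact Nat.one_lt_pow (by omega) hp1)
      have h0 : Group.nilpotencyClass (G ⧸ Z) ≠ 0 := by
        intro h
        rw [nilpotencyClass_zero_iff_subsingleton] at h
        exact false_of_nontrivial_of_subsingleton (G ⧸ Z)
      omega
    · have hsub : n - 1 - 2 = n - 3 := by omega
      have := ih (n - 1) (by omega) (by omega) (G ⧸ Z) hQp hQcard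
        (by rw [hQcomm, hsub]) hMQ hQnil
      omega
  haveI hGnontriv : Nontrivial G :=
    Finite.one_lt_card_iff_nontrivial.mp (by rw [hcard]; exact Nat.one_lt_pow (by omega) hp1)
  have hfin := nilpotencyClass_eq_quotient_center_plus_one (G := G)
  rw [hfin]
  show Group.nilpotencyClass (G ⧸ Z) + 1 = n - 1
  rw [hQclass]
  omega

theorem stmt_17 {p n : ℕ} (hp : p.Prime) (hn : 3 ≤ n) (S : Type*) [Group S] [Finite S]
    (hS : IsPGroup p S) (hcard : Nat.card S = p ^ n)
    (hcomm : commutator S = frattini S) (hΦ : (frattini S).index = p ^ 2)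
    (hM : ∃ M : Subgroup S, IsCoatom M ∧ ∀ a ∈ M, ∀ b ∈ M, a * b = b * a) :
    Group.nilpotencyClass S = n - 1 := by
  have hcc : Nat.card (commutator S) = p ^ (n - 2) := by
    have h1 : Nat.card (frattini S) * p ^ 2 = p ^ n := by
      rw [← hΦ, Subgroup.card_mul_index, hcard]
    have h2 : p ^ (n - 2) * p ^ 2 = p ^ n := by
      rw [← pow_add]; congr 1; omega
    rw [hcomm]
    exact Nat.eq_of_mul_eq_mul_right (pow_pos hp.pos _) (h1.trans h2.symm)
  exact aux_key hp n hn S hS hcard hcc hM (@IsPGroup.isNilpotent S _ _ p ⟨hp⟩ hS)
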